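/- arXiv:2503.20809 — 2 statements merged into one kernel-verified Lean document; each statement's English description precedes it below -/
import Mathlib

section
/- Let n ≥ 1 and let E, F ⊂ ℝⁿ be disjoint measurable sets with L_{s₀}(E,F) < ∞ for some s₀ ∈ (0,1/2). If min{𝓛ⁿ(E), 𝓛ⁿ(F)} < ∞, then lim_{s→0⁺} s · | L_s(E,F) − ∫_E ∫_F ∫₁^∞ p_t(x,y) t^{-(1+s)} dt dy dx | = 0. -/
open MeasureTheory Real Filter Topology Set
open scoped ENNReal

/-- The classical heat kernel on `ℝⁿ`. -/
noncomputable def heatKernel (n : ℕ) (t : ℝ) (x y : EuclideanSpace ℝ (Fin n)) : ℝ :=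
  (4 * π * t) ^ (-(n : ℝ) / 2) * Real.exp (-‖x - y‖ ^ 2 / (4 * t))

/-- `L_s(A,B) = ∫₀^∞ t^{-(1+s)} ∫_A ∫_B p_t(x,y) dy dx dt`. -/
noncomputable def Lfun (n : ℕ) (s : ℝ) (A B : Set (EuclideanSpace ℝ (Fin n))) : ℝ≥0∞ :=
  ∫⁻ t in Set.Ioi (0:ℝ), ENNReal.ofReal (t ^ (-(1 + s))) *
    ∫⁻ x in A, ∫⁻ y in B, ENNReal.ofReal (heatKernel n t x y)

/-- `M_s(E,F) = ∫_E ∫_F ∫₁^∞ p_t(x,y) t^{-(1+s)} dt dy dx`. -/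
noncomputable def Mfun (n : ℕ) (s : ℝ) (E F : Set (EuclideanSpace ℝ (Fin n))) : ℝ≥0∞ :=
  ∫⁻ x in E, ∫⁻ y in F, ∫⁻ t in Set.Ioi (1:ℝ),
    ENNReal.ofReal (heatKernel n t x y * t ^ (-(1 + s)))

/-- Inner double integral of the heat kernel. -/
noncomputable def Phi (n : ℕ) (E F : Set (EuclideanSpace ℝ (Fin n))) (t : ℝ) : ℝ≥0∞ :=
  ∫⁻ x in E, ∫⁻ y in F, ENNReal.ofReal (heatKernel n t x y)

lemma heatKernel_nonneg (n : ℕ) {t : ℝ} (ht : 0 < t) (x y : EuclideanSpace ℝ (Fin n)) :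
    0 ≤ heatKernel n t x y := by
  unfold heatKernel
  have h4 : (0:ℝ) < 4 * π * t := by positivity
  exact mul_nonneg (Real.rpow_nonneg h4.le _) (Real.exp_nonneg _)

lemma heatKernel_measurable (n : ℕ) :
    Measurable fun p : ℝ × (EuclideanSpace ℝ (Fin n) × EuclideanSpace ℝ (Fin n)) =>
      ENNReal.ofReal (heatKernel n p.1 p.2.1 p.2.2) := by
  unfold heatKernel
  fun_prop

/-- Tonelli: `Mfun` rewritten as a `t`-integral against `Phi`. -/
lemma Mfun_eq (n : ℕ) (s : ℝ) (E F : Set (EuclideanSpace ℝ (Fin n))) :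
    Mfun n s E F =
      ∫⁻ t in Set.Ioi (1:ℝ), ENNReal.ofReal (t ^ (-(1 + s))) * Phi n E F t := by
  have hmeas := heatKernel_measurable n
  set k : ℝ → EuclideanSpace ℝ (Fin n) → EuclideanSpace ℝ (Fin n) → ℝ≥0∞ :=
    fun t x y => ENNReal.ofReal (heatKernel n t x y) with hk
  set c : ℝ → ℝ≥0∞ := fun t => ENNReal.ofReal (t ^ (-(1 + s))) with hc
  have hcmeas : Measurable c := by
    simp only [hc]; fun_prop
  -- step 1: split the ofReal of the product
  have step1 : Mfun n s E F =
      ∫⁻ x in E, ∫⁻ y in F, ∫⁻ t in Set.Ioi (1:ℝ), k t x y * c t := by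
    unfold Mfun
    refine lintegral_congr fun x => lintegral_congr fun y => ?_
    refine setLIntegral_congr_fun measurableSet_Ioi (fun t ht => ?_)
    have ht0 : (0:ℝ) < t := lt_trans one_pos ht
    simp only [hk, hc]
    rw [ENNReal.ofReal_mul (heatKernel_nonneg n ht0 x y)]
  rw [step1]
  -- step 2: swap the y and t integrals
  have step2 : ∀ x, (∫⁻ y in F, ∫⁻ t in Set.Ioi (1:ℝ), k t x y * c t)
      = ∫⁻ t in Set.Ioi (1:ℝ), (∫⁻ y in F, k t x y) * c t := by
    intro x
    rw [lintegral_lintegral_swap]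
    · refine lintegral_congr fun t => ?_
      exact lintegral_mul_const'' _
        ((hmeas.comp (measurable_const.prodMk
          (measurable_const.prodMk measurable_id))).aemeasurable)
    · simp only [Function.uncurry_def]
      apply AEMeasurable.fun_mul
      · exact ((hmeas.comp (measurable_snd.prodMk
          (measurable_const.prodMk measurable_fst))).aemeasurable)
      · exact (hcmeas.comp measurable_snd).aemeasurable
  simp_rw [step2]
  -- step 3: swap the x and t integrals
  have hG : Measurable fun p : EuclideanSpace ℝ (Fin n) × ℝ => ∫⁻ y in F, k p.2 p.1 y := by
    exact Measurable.lintegral_prod_right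
      (f := fun (p : EuclideanSpace ℝ (Fin n) × ℝ) (y : EuclideanSpace ℝ (Fin n)) => k p.2 p.1 y)
      (hmeas.comp ((measurable_snd.comp measurable_fst).prodMk
        ((measurable_fst.comp measurable_fst).prodMk measurable_snd)))
  have step3 : (∫⁻ x in E, ∫⁻ t in Set.Ioi (1:ℝ), (∫⁻ y in F, k t x y) * c t)
      = ∫⁻ t in Set.Ioi (1:ℝ), (∫⁻ x in E, ∫⁻ y in F, k t x y) * c t := by
    rw [lintegral_lintegral_swap]
    · refine lintegral_congr fun t => ?_
      rw [lintegral_mul_const'' _ ?_]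
      exact (hG.comp (measurable_id.prodMk measurable_const)).aemeasurable
    · exact (hG.mul (hcmeas.comp measurable_snd)).aemeasurable
  rw [step3]
  exact lintegral_congr fun t => mul_comm _ _

/-- `Lfun` splits into the small-time and large-time parts. -/
lemma Lfun_eq (n : ℕ) (s : ℝ) (E F : Set (EuclideanSpace ℝ (Fin n))) :
    Lfun n s E F =
      (∫⁻ t in Set.Ioc (0:ℝ) 1, ENNReal.ofReal (t ^ (-(1 + s))) * Phi n E F t)
      + ∫⁻ t in Set.Ioi (1:ℝ), ENNReal.ofReal (t ^ (-(1 + s))) * Phi n E F t := by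
  unfold Lfun Phi
  rw [← Set.Ioc_union_Ioi_eq_Ioi (zero_le_one (α := ℝ)),
    lintegral_union measurableSet_Ioi (Set.Ioc_disjoint_Ioi le_rfl)]

/-- if `E, F` are disjoint measurable sets with `L_{s₀}(E,F) < ∞` for some
`s₀ ∈ (0,1/2)` and `min{𝓛ⁿ(E), 𝓛ⁿ(F)} < ∞`, then
`lim_{s→0⁺} s |L_s(E,F) − ∫_E ∫_F ∫₁^∞ p_t(x,y) t^{-(1+s)} dt dy dx| = 0`
(the absolute difference is encoded via truncated subtraction in `ℝ≥0∞`). -/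
theorem statement10 (n : ℕ) (hn : 1 ≤ n) (E F : Set (EuclideanSpace ℝ (Fin n)))
    (hE : MeasurableSet E) (hF : MeasurableSet F) (hEF : Disjoint E F)
    (s₀ : ℝ) (hs₀ : s₀ ∈ Set.Ioo (0:ℝ) (1/2)) (hfin : Lfun n s₀ E F < ⊤)
    (hmin : volume E < ⊤ ∨ volume F < ⊤) :
    Tendsto (fun s : ℝ => ENNReal.ofReal s *
        ((Lfun n s E F - Mfun n s E F) + (Mfun n s E F - Lfun n s E F)))
      (𝓝[>] (0:ℝ)) (𝓝 0) := by
  set I : ℝ → ℝ≥0∞ := fun s =>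
    ∫⁻ t in Set.Ioc (0:ℝ) 1, ENNReal.ofReal (t ^ (-(1 + s))) * Phi n E F t with hI
  set C : ℝ≥0∞ := Lfun n s₀ E F with hCdef
  have hC : C ≠ ⊤ := hfin.ne
  -- the key bound: for 0 < s ≤ s₀, the expression is at most s * C
  have key : ∀ s : ℝ, 0 < s → s ≤ s₀ →
      (Lfun n s E F - Mfun n s E F) + (Mfun n s E F - Lfun n s E F) ≤ C := by
    intro s hs hss₀
    have hLM : Lfun n s E F = I s + Mfun n s E F := by
      rw [Lfun_eq, Mfun_eq]
    have hML : Mfun n s E F ≤ Lfun n s E F := by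
      rw [hLM]; exact le_add_self
    have h1 : Lfun n s E F - Mfun n s E F ≤ I s :=
      tsub_le_iff_right.mpr (le_of_eq hLM)
    have h2 : Mfun n s E F - Lfun n s E F = 0 := tsub_eq_zero_of_le hML
    have hIs : I s ≤ I s₀ := by
      refine lintegral_mono_ae ?_
      filter_upwards [ae_restrict_mem measurableSet_Ioc] with t ht
      refine mul_le_mul_left (ENNReal.ofReal_le_ofReal ?_) _
      exact Real.rpow_le_rpow_of_exponent_ge ht.1 ht.2 (by linarith)
    have hIC : I s₀ ≤ C := by
      rw [hCdef, Lfun_eq]; exact le_self_add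
    calc (Lfun n s E F - Mfun n s E F) + (Mfun n s E F - Lfun n s E F)
        = Lfun n s E F - Mfun n s E F := by rw [h2, add_zero]
      _ ≤ I s := h1
      _ ≤ I s₀ := hIs
      _ ≤ C := hIC
  -- squeeze
  have hlim : Tendsto (fun s : ℝ => ENNReal.ofReal s * C) (𝓝[>] (0:ℝ)) (𝓝 0) := by
    have h1 : Tendsto (fun s : ℝ => ENNReal.ofReal s) (𝓝[>] (0:ℝ)) (𝓝 0) := by
      simpa using (ENNReal.continuous_ofReal.tendsto 0).mono_left nhdsWithin_le_nhds
    simpa using ENNReal.Tendsto.mul_const h1 (Or.inr hC)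
  refine tendsto_of_tendsto_of_tendsto_of_le_of_le' tendsto_const_nhds hlim ?_ ?_
  · exact Eventually.of_forall fun s => zero_le
  · filter_upwards [Ioc_mem_nhdsGT_of_mem (Set.left_mem_Ico.mpr hs₀.1)] with s hs
    exact mul_le_mul_right (key s hs.1 hs.2) _
end

section
/- Let n ≥ 1 and let E, F ⊂ ℝⁿ be disjoint measurable sets with L_{s₀}(E,F) < ∞ for some s₀ ∈ (0,1/2). If both 𝓛ⁿ(E) < ∞ and 𝓛ⁿ(F) < ∞, then lim_{s→0⁺} s · L_s(E,F) = 0. -/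
open MeasureTheory Real Filter Topology Set
open scoped ENNReal

lemma heatKernel_le (n : ℕ) {t : ℝ} (ht : 0 < t) (x y : EuclideanSpace ℝ (Fin n)) :
    heatKernel n t x y ≤ (4 * π * t) ^ (-(n : ℝ) / 2) := by
  unfold heatKernel
  have h1 : Real.exp (-‖x - y‖ ^ 2 / (4 * t)) ≤ 1 := by
    rw [Real.exp_le_one_iff]
    apply div_nonpos_of_nonpos_of_nonneg
    · simp [sq_nonneg]
    · linarith
  have h0 : (0:ℝ) ≤ (4 * π * t) ^ (-(n : ℝ) / 2) := by
    apply Real.rpow_nonneg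
    have := Real.pi_pos; nlinarith
  exact mul_le_of_le_one_right h0 h1

lemma inner_le (n : ℕ) {t : ℝ} (ht : 0 < t) (E F : Set (EuclideanSpace ℝ (Fin n))) :
    (∫⁻ x in E, ∫⁻ y in F, ENNReal.ofReal (heatKernel n t x y)) ≤
      ENNReal.ofReal ((4 * π * t) ^ (-(n : ℝ) / 2)) * volume F * volume E := by
  calc (∫⁻ x in E, ∫⁻ y in F, ENNReal.ofReal (heatKernel n t x y))
      ≤ ∫⁻ _x in E, ENNReal.ofReal ((4 * π * t) ^ (-(n : ℝ) / 2)) * volume F := by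
        refine lintegral_mono fun x => ?_
        calc (∫⁻ y in F, ENNReal.ofReal (heatKernel n t x y))
            ≤ ∫⁻ _y in F, ENNReal.ofReal ((4 * π * t) ^ (-(n : ℝ) / 2)) :=
              lintegral_mono fun y => ENNReal.ofReal_le_ofReal (heatKernel_le n ht x y)
          _ = ENNReal.ofReal ((4 * π * t) ^ (-(n : ℝ) / 2)) * volume F := by
              rw [setLIntegral_const]
    _ = ENNReal.ofReal ((4 * π * t) ^ (-(n : ℝ) / 2)) * volume F * volume E := by
        rw [setLIntegral_const]

lemma real_ineq (n : ℕ) (hn : 1 ≤ n) {t s : ℝ} (ht : 1 < t) (hs : 0 ≤ s) :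
    t ^ (-(1 + s)) * (4 * π * t) ^ (-(n : ℝ) / 2) ≤
      (4 * π) ^ (-(n : ℝ) / 2) * t ^ (-(3/2) : ℝ) := by
  have hπ : (0:ℝ) < 4 * π := by have := Real.pi_pos; linarith
  have ht0 : (0:ℝ) < t := lt_trans one_pos ht
  rw [Real.mul_rpow hπ.le ht0.le]
  have h1 : t ^ (-(1 + s)) ≤ t ^ (-1 : ℝ) :=
    Real.rpow_le_rpow_of_exponent_le ht.le (by linarith)
  have h2 : t ^ (-(n : ℝ) / 2) ≤ t ^ (-(1:ℝ) / 2) := by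
    apply Real.rpow_le_rpow_of_exponent_le ht.le
    have : (1:ℝ) ≤ (n:ℝ) := by exact_mod_cast hn
    linarith
  have h3 : t ^ (-1 : ℝ) * t ^ (-(1:ℝ) / 2) = t ^ (-(3/2) : ℝ) := by
    rw [← Real.rpow_add ht0]; norm_num
  have hc : (0:ℝ) ≤ (4 * π) ^ (-(n : ℝ) / 2) := Real.rpow_nonneg hπ.le _
  calc t ^ (-(1 + s)) * ((4 * π) ^ (-(n : ℝ) / 2) * t ^ (-(n : ℝ) / 2))
      = (4 * π) ^ (-(n : ℝ) / 2) * (t ^ (-(1 + s)) * t ^ (-(n : ℝ) / 2)) := by ring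
    _ ≤ (4 * π) ^ (-(n : ℝ) / 2) * (t ^ (-1 : ℝ) * t ^ (-(1:ℝ) / 2)) := by
        apply mul_le_mul_of_nonneg_left _ hc
        exact mul_le_mul h1 h2 (Real.rpow_nonneg ht0.le _) (Real.rpow_nonneg ht0.le _)
    _ = (4 * π) ^ (-(n : ℝ) / 2) * t ^ (-(3/2) : ℝ) := by rw [h3]

/-- if `E, F` are disjoint measurable sets with `L_{s₀}(E,F) < ∞` for some
`s₀ ∈ (0,1/2)` and both have finite Lebesgue measure, then `lim_{s→0⁺} s L_s(E,F) = 0`. -/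
theorem statement11 (n : ℕ) (hn : 1 ≤ n) (E F : Set (EuclideanSpace ℝ (Fin n)))
    (hE : MeasurableSet E) (hF : MeasurableSet F) (hEF : Disjoint E F)
    (s₀ : ℝ) (hs₀ : s₀ ∈ Set.Ioo (0:ℝ) (1/2)) (hfin : Lfun n s₀ E F < ⊤)
    (hμE : volume E < ⊤) (hμF : volume F < ⊤) :
    Tendsto (fun s : ℝ => ENNReal.ofReal s * Lfun n s E F) (𝓝[>] (0:ℝ)) (𝓝 0) := by
  obtain ⟨hs₀0, hs₀half⟩ := hs₀
  set K : ℝ≥0∞ := ENNReal.ofReal ((4 * π) ^ (-(n : ℝ) / 2)) * (volume F * volume E) with hKdef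
  set J : ℝ≥0∞ := ∫⁻ t in Set.Ioi (1:ℝ), ENNReal.ofReal (t ^ (-(3/2) : ℝ)) with hJdef
  have hJfin : J < ⊤ := by
    have hint : IntegrableOn (fun t : ℝ => t ^ (-(3/2) : ℝ)) (Set.Ioi 1) :=
      integrableOn_Ioi_rpow_of_lt (by norm_num) one_pos
    calc J ≤ ∫⁻ t in Set.Ioi (1:ℝ), ‖(t : ℝ) ^ (-(3/2) : ℝ)‖ₑ :=
          lintegral_ofReal_le_lintegral_enorm _
      _ < ⊤ := hint.2
  have hKfin : K ≠ ⊤ := by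
    apply ENNReal.mul_ne_top ENNReal.ofReal_ne_top
    exact ENNReal.mul_ne_top hμF.ne hμE.ne
  set M : ℝ≥0∞ := Lfun n s₀ E F + K * J with hMdef
  have hMfin : M ≠ ⊤ := by
    apply ENNReal.add_ne_top.2
    exact ⟨hfin.ne, ENNReal.mul_ne_top hKfin hJfin.ne⟩
  have key : ∀ s ∈ Set.Ioc (0:ℝ) s₀, Lfun n s E F ≤ M := by
    intro s hs
    have hsplit : Set.Ioi (0:ℝ) = Set.Ioc 0 1 ∪ Set.Ioi 1 :=
      (Set.Ioc_union_Ioi_eq_Ioi (by norm_num)).symm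
    rw [Lfun, hsplit, lintegral_union measurableSet_Ioi
      (Set.Ioc_disjoint_Ioi le_rfl)]
    have h1 : (∫⁻ t in Set.Ioc (0:ℝ) 1, ENNReal.ofReal (t ^ (-(1 + s))) *
        ∫⁻ x in E, ∫⁻ y in F, ENNReal.ofReal (heatKernel n t x y)) ≤ Lfun n s₀ E F := by
      rw [Lfun]
      refine le_trans (setLIntegral_mono' measurableSet_Ioc fun t htm => ?_)
        (lintegral_mono_set (by intro t htm; exact htm.1))
      apply mul_le_mul_left
      apply ENNReal.ofReal_le_ofReal
      exact Real.rpow_le_rpow_of_exponent_ge htm.1 htm.2 (by linarith [hs.2])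
    have h2 : (∫⁻ t in Set.Ioi (1:ℝ), ENNReal.ofReal (t ^ (-(1 + s))) *
        ∫⁻ x in E, ∫⁻ y in F, ENNReal.ofReal (heatKernel n t x y)) ≤ K * J := by
      calc (∫⁻ t in Set.Ioi (1:ℝ), ENNReal.ofReal (t ^ (-(1 + s))) *
            ∫⁻ x in E, ∫⁻ y in F, ENNReal.ofReal (heatKernel n t x y))
          ≤ ∫⁻ t in Set.Ioi (1:ℝ), K * ENNReal.ofReal (t ^ (-(3/2) : ℝ)) := by
            refine setLIntegral_mono' measurableSet_Ioi fun t htm => ?_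
            have ht1 : (1:ℝ) < t := htm
            have ht0 : (0:ℝ) < t := lt_trans one_pos ht1
            calc ENNReal.ofReal (t ^ (-(1 + s))) *
                  ∫⁻ x in E, ∫⁻ y in F, ENNReal.ofReal (heatKernel n t x y)
                ≤ ENNReal.ofReal (t ^ (-(1 + s))) *
                  (ENNReal.ofReal ((4 * π * t) ^ (-(n : ℝ) / 2)) * volume F * volume E) :=
                  mul_le_mul_right (inner_le n ht0 E F) _
              _ = ENNReal.ofReal (t ^ (-(1 + s)) * (4 * π * t) ^ (-(n : ℝ) / 2)) *
                  (volume F * volume E) := by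
                  rw [ENNReal.ofReal_mul (Real.rpow_nonneg ht0.le _)]; ring
              _ ≤ ENNReal.ofReal ((4 * π) ^ (-(n : ℝ) / 2) * t ^ (-(3/2) : ℝ)) *
                  (volume F * volume E) := by
                  exact mul_le_mul_left
                    (ENNReal.ofReal_le_ofReal (real_ineq n hn ht1 hs.1.le)) _
              _ = K * ENNReal.ofReal (t ^ (-(3/2) : ℝ)) := by
                  rw [hKdef, ENNReal.ofReal_mul (Real.rpow_nonneg (by positivity) _)]; ring
        _ = K * J := lintegral_const_mul' _ _ hKfin
    exact add_le_add h1 h2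
  have h1 : Tendsto (fun s : ℝ => ENNReal.ofReal s * M) (𝓝[>] (0:ℝ)) (𝓝 0) := by
    have ht : Tendsto (fun s : ℝ => ENNReal.ofReal s) (𝓝[>] (0:ℝ)) (𝓝 0) := by
      have h := (ENNReal.continuous_ofReal.tendsto 0).mono_left
        (nhdsWithin_le_nhds : 𝓝[>] (0:ℝ) ≤ 𝓝 0)
      simpa using h
    simpa using ENNReal.Tendsto.mul_const ht (Or.inr hMfin)
  refine tendsto_of_tendsto_of_tendsto_of_le_of_le' tendsto_const_nhds h1 ?_ ?_
  · filter_upwards with s using zero_le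
  · filter_upwards [Ioc_mem_nhdsGT_of_mem ⟨le_refl (0:ℝ), hs₀0⟩] with s hs
    exact mul_le_mul_right (key s hs) _
end
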